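/- Let m ≥ 1, M = 2m, and let V = Finset (Fin M) → ℂ with the Jordan–Wigner creation operators c_k and annihilation operators d_k for k : Fin M. Let ω : Fin m → ℝ with ω_k > 0 for all k, and for n : ℤ define the linear operators J_x^{(n)} = (1/2) ∑_{k<m} ω_k^n (c_k ∘ d_{m+k} + c_{m+k} ∘ d_k), J_y^{(n)} = (1/(2i)) ∑_{k<m} ω_k^n (c_k ∘ d_{m+k} − c_{m+k} ∘ d_k), and J_z^{(n)} = (1/2) ∑_{k<m} ω_k^n (c_k ∘ d_k − c_{m+k} ∘ d_{m+k}) on V, where m+k denotes the element of Fin 2m with value m + k. Then for all n, p : ℤ the su(2) loop-algebra relations hold: J_x^{(n)} ∘ J_y^{(p)} − J_y^{(p)} ∘ J_x^{(n)} = i J_z^{(n+p)}, J_y^{(n)} ∘ J_z^{(p)} − J_z^{(p)} ∘ J_y^{(n)} = i J_x^{(n+p)}, and J_z^{(n)} ∘ J_x^{(p)} − J_x^{(p)} ∘ J_z^{(n)} = i J_y^{(n+p)}. -/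

import Mathlib

open scoped BigOperators

abbrev FockSpace (M : ℕ) : Type := Finset (Fin M) → ℂ

noncomputable def crea {M : ℕ} (k : Fin M) : FockSpace M →ₗ[ℂ] FockSpace M :=
  (Pi.basisFun ℂ (Finset (Fin M))).constr ℂ fun S =>
    if k ∈ S then 0
    else ((-1 : ℂ) ^ (S.filter fun j => j < k).card) • (Pi.single (insert k S) (1 : ℂ) : FockSpace M)

noncomputable def annih {M : ℕ} (k : Fin M) : FockSpace M →ₗ[ℂ] FockSpace M :=
  (Pi.basisFun ℂ (Finset (Fin M))).constr ℂ fun S =>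
    if k ∈ S then ((-1 : ℂ) ^ (S.filter fun j => j < k).card) • (Pi.single (S.erase k) (1 : ℂ) : FockSpace M)
    else 0

namespace JW
variable {M : ℕ}

/-- sign -/
noncomputable def sg (S : Finset (Fin M)) (k : Fin M) : ℂ :=
  (-1 : ℂ) ^ (S.filter fun j => j < k).card

lemma basisFun_eq_single (S : Finset (Fin M)) :
    (Pi.basisFun ℂ (Finset (Fin M))) S = Pi.single S (1:ℂ) := by
  simp [Pi.basisFun_apply]

lemma crea_single (k : Fin M) (S : Finset (Fin M)) :
    crea k (Pi.single S (1:ℂ) : FockSpace M) =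
      if k ∈ S then 0 else sg S k • (Pi.single (insert k S) (1:ℂ) : FockSpace M) := by
  rw [← basisFun_eq_single, crea, Module.Basis.constr_basis]
  rfl

lemma annih_single (k : Fin M) (S : Finset (Fin M)) :
    annih k (Pi.single S (1:ℂ) : FockSpace M) =
      if k ∈ S then sg S k • (Pi.single (S.erase k) (1:ℂ) : FockSpace M) else 0 := by
  rw [← basisFun_eq_single, annih, Module.Basis.constr_basis]
  rfl

lemma sg_mul_self (S : Finset (Fin M)) (k : Fin M) : sg S k * sg S k = 1 := by
  rw [sg, ← pow_add, ← two_mul, pow_mul]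
  norm_num

lemma sg_insert (S : Finset (Fin M)) {b : Fin M} (a : Fin M) (hb : b ∉ S) :
    sg (insert b S) a = (if b < a then -1 else 1) * sg S a := by
  unfold sg
  rw [Finset.filter_insert]
  split_ifs with h
  · rw [Finset.card_insert_of_notMem (by simp [hb]), pow_succ]
    ring
  · ring

lemma sg_erase (S : Finset (Fin M)) {b : Fin M} (a : Fin M) (hb : b ∈ S) :
    sg (S.erase b) a = (if b < a then -1 else 1) * sg S a := by
  unfold sg
  rw [Finset.filter_erase]
  split_ifs with h
  · rw [Finset.card_erase_of_mem (by simp [hb, h])]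
    have hpos : 0 < ((S.filter fun j => j < a).card) := by
      refine Finset.card_pos.2 ⟨b, ?_⟩
      simp [hb, h]
    obtain ⟨c, hc⟩ : ∃ c, (S.filter fun j => j < a).card = c + 1 :=
      ⟨(S.filter fun j => j < a).card - 1, by omega⟩
    rw [hc, pow_succ]
    simp
  · rw [Finset.erase_eq_of_notMem (by simp [h])]
    ring

end JW

namespace JW
variable {M : ℕ}

lemma end_ext {f g : Module.End ℂ (FockSpace M)}
    (h : ∀ S : Finset (Fin M), f (Pi.single S (1:ℂ)) = g (Pi.single S (1:ℂ))) : f = g := by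
  apply (Pi.basisFun ℂ (Finset (Fin M))).ext
  intro S; simpa [Pi.basisFun_apply] using h S

lemma sign_cancel {a b : Fin M} (hab : a ≠ b) :
    (if a < b then (-1:ℂ) else 1) + (if b < a then (-1:ℂ) else 1) = 0 := by
  rcases lt_trichotomy a b with h | h | h
  · simp [h, not_lt_of_gt h]
  · exact absurd h hab
  · simp [h, not_lt_of_gt h]

lemma CAR_mixed (a b : Fin M) :
    (annih b * crea a + crea a * annih b : Module.End ℂ (FockSpace M))
      = if a = b then 1 else 0 := by
  apply end_ext
  intro S
  by_cases hab : a = b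
  · subst hab
    by_cases hA : a ∈ S
    · simp [Module.End.mul_apply, crea_single, annih_single, hA,
        Finset.insert_erase hA, sg_erase S a hA, smul_smul, sg_mul_self]
    · simp [Module.End.mul_apply, crea_single, annih_single, hA,
        Finset.erase_insert hA, sg_insert S a hA, smul_smul, sg_mul_self]
  · by_cases hA : a ∈ S <;> by_cases hB : b ∈ S
    · simp [Module.End.mul_apply, crea_single, annih_single, hA, hB, hab,
        Finset.mem_erase, Ne.symm hab]
    · simp [Module.End.mul_apply, crea_single, annih_single, hA, hB, hab]
    · have h1 : b ∈ insert a S := Finset.mem_insert_of_mem hB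
      have h2 : a ∉ S.erase b := fun h => hA (Finset.mem_of_mem_erase h)
      simp only [LinearMap.add_apply, Module.End.mul_apply, LinearMap.zero_apply]
      rw [crea_single, if_neg hA, annih_single, if_pos hB, map_smul, map_smul,
        annih_single, if_pos h1, crea_single, if_neg h2,
        Finset.erase_insert_of_ne hab, sg_insert S b hA, sg_erase S a hB]
      rw [smul_smul, smul_smul, ← add_smul]
      have hz : sg S a * ((if a < b then (-1:ℂ) else 1) * sg S b)
          + sg S b * ((if b < a then (-1:ℂ) else 1) * sg S a) = 0 := by
        linear_combination (sign_cancel hab) * (sg S a * sg S b)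
      rw [hz, zero_smul]
      simp [hab]
    · simp [Module.End.mul_apply, crea_single, annih_single, hA, hB, hab,
        Finset.mem_insert, Ne.symm hab]

end JW

namespace JW
variable {M : ℕ}

lemma CAR_cc (a b : Fin M) :
    (crea a * crea b : Module.End ℂ (FockSpace M)) = -(crea b * crea a) := by
  apply end_ext
  intro S
  simp only [Module.End.mul_apply, LinearMap.neg_apply]
  by_cases hB : b ∈ S
  · rw [crea_single b S, if_pos hB, map_zero]
    by_cases hA : a ∈ S
    · rw [crea_single a S, if_pos hA, map_zero, neg_zero]
    · rw [crea_single a S, if_neg hA, map_smul, crea_single,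
        if_pos (Finset.mem_insert_of_mem hB), smul_zero, neg_zero]
  · by_cases hA : a ∈ S
    · rw [crea_single a S, if_pos hA, map_zero, neg_zero, crea_single b S,
        if_neg hB, map_smul, crea_single, if_pos (Finset.mem_insert_of_mem hA), smul_zero]
    · by_cases hab : a = b
      · subst hab
        rw [crea_single a S, if_neg hA, map_smul, crea_single,
          if_pos (Finset.mem_insert_self a S), smul_zero, neg_zero]
      · have h1 : a ∉ insert b S := by simp [hab, hA]
        have h2 : b ∉ insert a S := by simp [Ne.symm hab, hB]
        rw [crea_single b S, if_neg hB, map_smul, crea_single, if_neg h1,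
          crea_single a S, if_neg hA, map_smul, crea_single, if_neg h2,
          smul_smul, smul_smul, Finset.insert_comm, sg_insert S a hB, sg_insert S b hA,
          ← neg_smul]
        congr 1
        linear_combination (sign_cancel hab) * (sg S a * sg S b)

lemma CAR_dd (a b : Fin M) :
    (annih a * annih b : Module.End ℂ (FockSpace M)) = -(annih b * annih a) := by
  apply end_ext
  intro S
  simp only [Module.End.mul_apply, LinearMap.neg_apply]
  by_cases hB : b ∈ S
  · by_cases hA : a ∈ S
    · by_cases hab : a = b
      · subst hab
        rw [annih_single a S, if_pos hA, map_smul, annih_single,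
          if_neg (Finset.notMem_erase a S), smul_zero, neg_zero]
      · have h1 : a ∈ S.erase b := Finset.mem_erase.2 ⟨hab, hA⟩
        have h2 : b ∈ S.erase a := Finset.mem_erase.2 ⟨Ne.symm hab, hB⟩
        rw [annih_single b S, if_pos hB, map_smul, annih_single, if_pos h1,
          annih_single a S, if_pos hA, map_smul, annih_single, if_pos h2,
          smul_smul, smul_smul, Finset.erase_right_comm, sg_erase S a hB, sg_erase S b hA,
          ← neg_smul]
        congr 1
        linear_combination (sign_cancel hab) * (sg S a * sg S b)
    · rw [annih_single a S, if_neg hA, map_zero, neg_zero, annih_single b S,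
        if_pos hB, map_smul, annih_single,
        if_neg (fun h => hA (Finset.mem_of_mem_erase h)), smul_zero]
  · rw [annih_single b S, if_neg hB, map_zero]
    by_cases hA : a ∈ S
    · rw [annih_single a S, if_pos hA, map_smul, annih_single,
        if_neg (by simp [hB, Finset.mem_erase]), smul_zero, neg_zero]
    · rw [annih_single a S, if_neg hA, map_zero, neg_zero]

end JW

namespace JW
variable {M : ℕ}

lemma quartic {R : Type*} [Ring R] (ca cc db dd t1 t2 : R)
    (h1 : db * cc = t1 - cc * db) (h2 : dd * ca = t2 - ca * dd)
    (h3 : ca * cc = -(cc * ca)) (h4 : db * dd = -(dd * db)) :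
    (ca * db) * (cc * dd) - (cc * dd) * (ca * db) = ca * t1 * dd - cc * t2 * db := by
  have e1 : (ca * db) * (cc * dd) = ca * t1 * dd - ca * (cc * db) * dd := by
    calc (ca*db)*(cc*dd) = ca * (db * cc) * dd := by noncomm_ring
    _ = ca * (t1 - cc*db) * dd := by rw [h1]
    _ = ca * t1 * dd - ca * (cc * db) * dd := by noncomm_ring
  have e2 : (cc * dd) * (ca * db) = cc * t2 * db - cc * (ca * dd) * db := by
    calc (cc*dd)*(ca*db) = cc * (dd * ca) * db := by noncomm_ring
    _ = cc * (t2 - ca*dd) * db := by rw [h2]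
    _ = cc * t2 * db - cc * (ca * dd) * db := by noncomm_ring
  have e3 : ca * (cc * db) * dd = cc * (ca * dd) * db := by
    calc ca * (cc*db) * dd = (ca * cc) * (db * dd) := by noncomm_ring
    _ = (-(cc*ca)) * (-(dd*db)) := by rw [h3, h4]
    _ = cc * (ca * dd) * db := by noncomm_ring
  rw [e1, e2, e3]
  noncomm_ring

lemma Ecomm (a b c d : Fin M) :
    (crea a * annih b) * (crea c * annih d) - (crea c * annih d) * (crea a * annih b)
      = (if c = b then (crea a * annih d : Module.End ℂ (FockSpace M)) else 0)
        - (if a = d then (crea c * annih b : Module.End ℂ (FockSpace M)) else 0) := by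
  rw [quartic (crea a) (crea c) (annih b) (annih d) _ _
    (eq_sub_of_add_eq (CAR_mixed c b)) (eq_sub_of_add_eq (CAR_mixed a d))
    (CAR_cc a c) (CAR_dd b d)]
  split_ifs <;> noncomm_ring

end JW

def low {m : ℕ} (k : Fin m) : Fin (2 * m) := ⟨k.1, by have := k.isLt; omega⟩
def high {m : ℕ} (k : Fin m) : Fin (2 * m) := ⟨m + k.1, by have := k.isLt; omega⟩

namespace JW
variable {M : ℕ}

lemma Ecommute {a b c d : Fin M} (h1 : c ≠ b) (h2 : a ≠ d) :
    Commute (crea a * annih b : Module.End ℂ (FockSpace M)) (crea c * annih d) := by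
  have h := Ecomm a b c d
  rw [if_neg h1, if_neg h2, sub_zero] at h
  exact sub_eq_zero.1 h

lemma nrXY {R : Type*} [Ring R] (P Q : R) :
    (P+Q)*(P-Q) - (P-Q)*(P+Q) = -(P*Q - Q*P) - (P*Q - Q*P) := by noncomm_ring

lemma nrYZ {R : Type*} [Ring R] (P Q R' S : R) :
    (P-Q)*(R'-S) - (R'-S)*(P-Q)
      = (P*R' - R'*P) - (P*S - S*P) - (Q*R' - R'*Q) + (Q*S - S*Q) := by noncomm_ring

lemma nrZX {R : Type*} [Ring R] (P Q R' S : R) :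
    (R'-S)*(P+Q) - (P+Q)*(R'-S)
      = (R'*P - P*R') + (R'*Q - Q*R') - (S*P - P*S) - (S*Q - Q*S) := by noncomm_ring

lemma commXY {a b : Fin M} (hab : a ≠ b) :
    (crea a * annih b + crea b * annih a) * (crea a * annih b - crea b * annih a)
      - (crea a * annih b - crea b * annih a) * (crea a * annih b + crea b * annih a)
      = (-2 : ℂ) • (crea a * annih a - crea b * annih b) := by
  have h1 := Ecomm a b b a (M := M)
  rw [if_pos rfl, if_pos rfl] at h1
  rw [nrXY, h1]
  module

lemma commYZ {a b : Fin M} (hab : a ≠ b) :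
    (crea a * annih b - crea b * annih a) * (crea a * annih a - crea b * annih b)
      - (crea a * annih a - crea b * annih b) * (crea a * annih b - crea b * annih a)
      = (-2 : ℂ) • (crea a * annih b + crea b * annih a) := by
  have h1 := Ecomm a b a a (M := M)
  rw [if_neg hab, if_pos rfl, zero_sub] at h1
  have h2 := Ecomm a b b b (M := M)
  rw [if_pos rfl, if_neg hab, sub_zero] at h2
  have h3 := Ecomm b a a a (M := M)
  rw [if_pos rfl, if_neg (Ne.symm hab), sub_zero] at h3
  have h4 := Ecomm b a b b (M := M)
  rw [if_neg (Ne.symm hab), if_pos rfl, zero_sub] at h4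
  rw [nrYZ, h1, h2, h3, h4]
  module

lemma commZX {a b : Fin M} (hab : a ≠ b) :
    (crea a * annih a - crea b * annih b) * (crea a * annih b + crea b * annih a)
      - (crea a * annih b + crea b * annih a) * (crea a * annih a - crea b * annih b)
      = (2 : ℂ) • (crea a * annih b - crea b * annih a) := by
  have h1 := Ecomm a a a b (M := M)
  rw [if_pos rfl, if_neg hab, sub_zero] at h1
  have h2 := Ecomm a a b a (M := M)
  rw [if_neg (Ne.symm hab), if_pos rfl, zero_sub] at h2
  have h3 := Ecomm b b a b (M := M)
  rw [if_neg hab, if_pos rfl, zero_sub] at h3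
  have h4 := Ecomm b b b a (M := M)
  rw [if_pos rfl, if_neg (Ne.symm hab), sub_zero] at h4
  rw [nrZX, h1, h2, h3, h4]
  module

end JW

noncomputable def Jx (m : ℕ) (ω : Fin m → ℝ) (n : ℤ) :
    FockSpace (2 * m) →ₗ[ℂ] FockSpace (2 * m) :=
  (1 / 2 : ℂ) • ∑ k : Fin m, ((ω k ^ n : ℝ) : ℂ) •
    (crea (low k) ∘ₗ annih (high k) + crea (high k) ∘ₗ annih (low k))

noncomputable def Jy (m : ℕ) (ω : Fin m → ℝ) (n : ℤ) :
    FockSpace (2 * m) →ₗ[ℂ] FockSpace (2 * m) :=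
  (1 / (2 * Complex.I) : ℂ) • ∑ k : Fin m, ((ω k ^ n : ℝ) : ℂ) •
    (crea (low k) ∘ₗ annih (high k) - crea (high k) ∘ₗ annih (low k))

noncomputable def Jz (m : ℕ) (ω : Fin m → ℝ) (n : ℤ) :
    FockSpace (2 * m) →ₗ[ℂ] FockSpace (2 * m) :=
  (1 / 2 : ℂ) • ∑ k : Fin m, ((ω k ^ n : ℝ) : ℂ) •
    (crea (low k) ∘ₗ annih (low k) - crea (high k) ∘ₗ annih (high k))

namespace JW

lemma low_ne_high {m : ℕ} (k j : Fin m) : low k ≠ high j := by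
  intro e
  have h2 := congrArg Fin.val e
  have := k.isLt
  simp only [low, high] at h2
  omega

lemma high_ne_low {m : ℕ} (k j : Fin m) : high k ≠ low j := (low_ne_high j k).symm

lemma low_ne_low {m : ℕ} {k j : Fin m} (h : k ≠ j) : low k ≠ low j := by
  intro e
  have h2 := congrArg Fin.val e
  simp only [low] at h2
  exact h (Fin.ext h2)

lemma high_ne_high {m : ℕ} {k j : Fin m} (h : k ≠ j) : high k ≠ high j := by
  intro e
  have h2 := congrArg Fin.val e
  simp only [high] at h2
  exact h (Fin.ext (by omega))

variable {M : ℕ}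

lemma comm_sum {mm : ℕ} (A B : Fin mm → Module.End ℂ (FockSpace M)) (u v : Fin mm → ℂ)
    (h : ∀ k j, k ≠ j → Commute (A k) (B j)) :
    (∑ k, u k • A k) * (∑ j, v j • B j) - (∑ j, v j • B j) * (∑ k, u k • A k)
      = ∑ k, (u k * v k) • (A k * B k - B k * A k) := by
  have e1 : (∑ k, u k • A k) * (∑ j, v j • B j)
      = ∑ k, ∑ j, (u k • A k) * (v j • B j) := Finset.sum_mul_sum _ _ _ _
  have e2 : (∑ j, v j • B j) * (∑ k, u k • A k)
      = ∑ k, ∑ j, (v j • B j) * (u k • A k) := by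
    rw [Finset.sum_mul_sum]
    exact Finset.sum_comm
  rw [e1, e2, ← Finset.sum_sub_distrib]
  refine Finset.sum_congr rfl fun k _ => ?_
  rw [← Finset.sum_sub_distrib, Finset.sum_eq_single k]
  · rw [smul_mul_assoc, smul_mul_assoc, mul_smul_comm, mul_smul_comm, smul_smul, smul_smul,
      mul_comm (v k) (u k)]
    exact (smul_sub _ _ _).symm
  · intro j _ hj
    have hc : Commute (u k • A k) (v j • B j) :=
      ((h k j (Ne.symm hj)).smul_left _).smul_right _
    exact sub_eq_zero_of_eq hc.eq
  · simp

lemma assemble {mm : ℕ} (α β γ e : ℂ) (u v w : Fin mm → ℂ)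
    (A B C : Fin mm → Module.End ℂ (FockSpace M))
    (hcomm : ∀ k j, k ≠ j → Commute (A k) (B j))
    (hdiag : ∀ k, A k * B k - B k * A k = e • C k)
    (hscal : ∀ k, α * β * (u k * v k * e) = Complex.I * (γ * w k)) :
    (α • ∑ k, u k • A k) * (β • ∑ j, v j • B j)
      - (β • ∑ j, v j • B j) * (α • ∑ k, u k • A k)
      = Complex.I • (γ • ∑ k, w k • C k) := by
  have h1 : (α • ∑ k, u k • A k) * (β • ∑ j, v j • B j)
      - (β • ∑ j, v j • B j) * (α • ∑ k, u k • A k)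
      = (α * β) • ((∑ k, u k • A k) * (∑ j, v j • B j)
        - (∑ j, v j • B j) * (∑ k, u k • A k)) := by
    rw [smul_mul_assoc, mul_smul_comm, smul_mul_assoc, mul_smul_comm,
      smul_smul, smul_smul, mul_comm β α, smul_sub]
  rw [h1, comm_sum A B u v hcomm]
  rw [Finset.smul_sum, Finset.smul_sum, Finset.smul_sum]
  refine Finset.sum_congr rfl fun k _ => ?_
  rw [hdiag k, smul_smul, smul_smul, smul_smul, smul_smul]
  congr 1
  linear_combination hscal k

end JW

theorem su2_loop_algebra_relations (m : ℕ) (hm : 1 ≤ m)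
    (ω : Fin m → ℝ) (hω : ∀ k, 0 < ω k) (n p : ℤ) :
    (Jx m ω n ∘ₗ Jy m ω p - Jy m ω p ∘ₗ Jx m ω n = Complex.I • Jz m ω (n + p))
    ∧ (Jy m ω n ∘ₗ Jz m ω p - Jz m ω p ∘ₗ Jy m ω n = Complex.I • Jx m ω (n + p))
    ∧ (Jz m ω n ∘ₗ Jx m ω p - Jx m ω p ∘ₗ Jz m ω n = Complex.I • Jy m ω (n + p)) := by
  have hwne : ∀ k, (ω k : ℝ) ≠ 0 := fun k => ne_of_gt (hω k)
  have hw : ∀ (k : Fin m) (a b : ℤ), ((ω k ^ a : ℝ):ℂ) * ((ω k ^ b : ℝ):ℂ) = ((ω k ^ (a+b) : ℝ):ℂ) := by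
    intro k a b
    rw [← Complex.ofReal_mul, ← zpow_add₀ (hwne k)]
  have hc1 : (1/2 : ℂ) * (1/(2*Complex.I)) * (-2) = Complex.I * (1/2) := by
    have h := Complex.I_ne_zero; field_simp; linear_combination (-1:ℂ) * Complex.I_sq
  have hc2 : (1/(2*Complex.I) : ℂ) * (1/2) * (-2) = Complex.I * (1/2) := by
    have h := Complex.I_ne_zero; field_simp; linear_combination (-1:ℂ) * Complex.I_sq
  have hc3 : (1/2 : ℂ) * (1/2) * 2 = Complex.I * (1/(2*Complex.I)) := by
    have h := Complex.I_ne_zero; field_simp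
  refine ⟨?_, ?_, ?_⟩
  · simp only [Jx, Jy, Jz, ← Module.End.mul_eq_comp]
    refine JW.assemble (1/2) (1/(2*Complex.I)) (1/2) (-2)
      (fun k => ((ω k ^ n : ℝ):ℂ)) (fun k => ((ω k ^ p : ℝ):ℂ)) (fun k => ((ω k ^ (n+p) : ℝ):ℂ))
      (fun k => crea (low k) * annih (high k) + crea (high k) * annih (low k))
      (fun k => crea (low k) * annih (high k) - crea (high k) * annih (low k))
      (fun k => crea (low k) * annih (low k) - crea (high k) * annih (high k))
      ?_ ?_ ?_
    · intro k j hkj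
      exact Commute.add_left
        ((JW.Ecommute (JW.low_ne_high j k) (JW.low_ne_high k j)).sub_right
          (JW.Ecommute (JW.high_ne_high (Ne.symm hkj)) (JW.low_ne_low hkj)))
        ((JW.Ecommute (JW.low_ne_low (Ne.symm hkj)) (JW.high_ne_high hkj)).sub_right
          (JW.Ecommute (JW.high_ne_low j k) (JW.high_ne_low k j)))
    · intro k
      exact JW.commXY (JW.low_ne_high k k)
    · intro k
      linear_combination ((ω k ^ (n+p) : ℝ):ℂ) * hc1 + ((1/2 : ℂ) * (1/(2*Complex.I)) * (-2)) * hw k n p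
  · simp only [Jx, Jy, Jz, ← Module.End.mul_eq_comp]
    refine JW.assemble (1/(2*Complex.I)) (1/2) (1/2) (-2)
      (fun k => ((ω k ^ n : ℝ):ℂ)) (fun k => ((ω k ^ p : ℝ):ℂ)) (fun k => ((ω k ^ (n+p) : ℝ):ℂ))
      (fun k => crea (low k) * annih (high k) - crea (high k) * annih (low k))
      (fun k => crea (low k) * annih (low k) - crea (high k) * annih (high k))
      (fun k => crea (low k) * annih (high k) + crea (high k) * annih (low k))
      ?_ ?_ ?_
    · intro k j hkj
      exact Commute.sub_left
        ((JW.Ecommute (JW.low_ne_high j k) (JW.low_ne_low hkj)).sub_right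
          (JW.Ecommute (JW.high_ne_high (Ne.symm hkj)) (JW.low_ne_high k j)))
        ((JW.Ecommute (JW.low_ne_low (Ne.symm hkj)) (JW.high_ne_low k j)).sub_right
          (JW.Ecommute (JW.high_ne_low j k) (JW.high_ne_high hkj)))
    · intro k
      exact JW.commYZ (JW.low_ne_high k k)
    · intro k
      linear_combination ((ω k ^ (n+p) : ℝ):ℂ) * hc2 + ((1/(2*Complex.I) : ℂ) * (1/2) * (-2)) * hw k n p
  · simp only [Jx, Jy, Jz, ← Module.End.mul_eq_comp]
    refine JW.assemble (1/2) (1/2) (1/(2*Complex.I)) 2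
      (fun k => ((ω k ^ n : ℝ):ℂ)) (fun k => ((ω k ^ p : ℝ):ℂ)) (fun k => ((ω k ^ (n+p) : ℝ):ℂ))
      (fun k => crea (low k) * annih (low k) - crea (high k) * annih (high k))
      (fun k => crea (low k) * annih (high k) + crea (high k) * annih (low k))
      (fun k => crea (low k) * annih (high k) - crea (high k) * annih (low k))
      ?_ ?_ ?_
    · intro k j hkj
      exact Commute.sub_left
        ((JW.Ecommute (JW.low_ne_low (Ne.symm hkj)) (JW.low_ne_high k j)).add_right
          (JW.Ecommute (JW.high_ne_low j k) (JW.low_ne_low hkj)))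
        ((JW.Ecommute (JW.low_ne_high j k) (JW.high_ne_high hkj)).add_right
          (JW.Ecommute (JW.high_ne_high (Ne.symm hkj)) (JW.high_ne_low k j)))
    · intro k
      exact JW.commZX (JW.low_ne_high k k)
    · intro k
      linear_combination ((ω k ^ (n+p) : ℝ):ℂ) * hc3 + ((1/2 : ℂ) * (1/2) * 2) * hw k n p
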